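/- Let φ be a lattice combination of literals in disjunctive normal form, given by a finite nonempty index type I, for each i : I a finite nonempty index type J i, variables v : (i : I) → J i → V, and signs s : (i : I) → J i → Bool. Then the following are equivalent: (1) φ is a classical propositional contradiction, i.e., for every b : V → Bool, it is not the case that there exists i such that for all j the literal ℓ_{ij} is true (where ℓ_{ij} = b (v i j) if s i j = true and ℓ_{ij} = ¬ b (v i j) otherwise); (2) for every e : V → ℝ with 0 ≤ e p ≤ 1 for all p, the Gödel value of the star translation, namely max over i of (min over j of ℓ'_{ij}), equals 0, where ℓ'_{ij} = e (v i j) if s i j = true and ℓ'_{ij} = (if e (v i j) = 0 then 1 else 0) otherwise. -/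

import Mathlib

/-- A DNF lattice combination of literals is a classical propositional contradiction
iff the Gödel value of its star translation is `0` under every `[0,1]`-evaluation. -/
theorem dnf_contradiction_iff_godel_star_zero
    {V : Type*} {I : Type*} [Fintype I] [Nonempty I]
    {J : I → Type*} [∀ i, Fintype (J i)] [∀ i, Nonempty (J i)]
    (v : (i : I) → J i → V) (s : (i : I) → J i → Bool) :
    (∀ b : V → Bool, ¬ ∃ i : I, ∀ j : J i,
        (if s i j then b (v i j) else ! b (v i j)) = true) ↔
    (∀ e : V → ℝ, (∀ p, 0 ≤ e p ∧ e p ≤ 1) →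
      Finset.univ.sup' Finset.univ_nonempty (fun i : I =>
        Finset.univ.inf' Finset.univ_nonempty (fun j : J i =>
          if s i j then e (v i j) else (if e (v i j) = 0 then (1 : ℝ) else 0))) = 0) := by
  constructor
  · intro h e he
    apply le_antisymm
    · apply Finset.sup'_le
      intro i _
      have hnot := h (fun p => decide (e p ≠ 0))
      push_neg at hnot
      obtain ⟨j, hj⟩ := hnot i
      apply le_trans (Finset.inf'_le _ (Finset.mem_univ j))
      by_cases hs : s i j
      · simp [hs] at hj ⊢
        rw [hj]
      · simp [hs] at hj ⊢
        simp [hj]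
    · apply le_trans _ (Finset.le_sup' _ (Finset.mem_univ (Classical.arbitrary I)))
      apply Finset.le_inf'
      intro j _
      by_cases hs : s (Classical.arbitrary I) j
      · simp [hs, (he _).1]
      · simp [hs]
        split <;> norm_num
  · intro h b ⟨i, hi⟩
    have := h (fun p => if b p then 1 else 0) (by intro p; split <;> norm_num)
    have h1 : (1:ℝ) ≤ Finset.univ.sup' Finset.univ_nonempty (fun i : I =>
        Finset.univ.inf' Finset.univ_nonempty (fun j : J i =>
          if s i j then (if b (v i j) then (1:ℝ) else 0) else
            (if (if b (v i j) then (1:ℝ) else 0) = 0 then (1 : ℝ) else 0))) := by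
      apply le_trans _ (Finset.le_sup' _ (Finset.mem_univ i))
      apply Finset.le_inf'
      intro j _
      have := hi j
      by_cases hs : s i j <;> simp [hs] at this ⊢ <;> simp [this]
    rw [this] at h1
    norm_num at h1
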